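/- Let G be a connected graph and v a cut vertex of G contained in blocks B_1,…,B_k, with v ∉ S. Then v is dominated by S in every spanning tree of G if and only if there exists an index i such that all neighbours of v within the block B_i belong to S. -/

import Mathlib

open SimpleGraph

variable {V : Type*}

/-- Number of connected components of a graph. -/
noncomputable def numComponents (G : SimpleGraph V) : ℕ := Nat.card G.ConnectedComponent

/-- A vertex is a cut vertex if its removal increases the number of connected components. -/
def IsCutVertex (G : SimpleGraph V) (v : V) : Prop :=
  numComponents G < numComponents (G.induce {u | u ≠ v})

/-- `T` is a spanning tree of `G`: a subgraph on all vertices of `G` that is a tree. -/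
def IsSpanningTree (G T : SimpleGraph V) : Prop := T ≤ G ∧ T.IsTree

/-- `v` is dominated by `S` in the graph `T`. -/
def DominatedIn (T : SimpleGraph V) (S : Set V) (v : V) : Prop :=
  v ∈ S ∨ ∃ u ∈ S, T.Adj v u

/-- `v` is simultaneously dominated by `S`: dominated in every spanning tree of `G`. -/
def SimDominated (G : SimpleGraph V) (S : Set V) (v : V) : Prop :=
  ∀ T : SimpleGraph V, IsSpanningTree G T → DominatedIn T S v

/-- `S` is a simultaneous dominating set of `G`. -/
def IsSDSet (G : SimpleGraph V) (S : Set V) : Prop := ∀ v, SimDominated G S v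

/-- `C` is a vertex cover of `G`. -/
def IsVertexCover (G : SimpleGraph V) (C : Set V) : Prop :=
  ∀ ⦃u v : V⦄, G.Adj u v → u ∈ C ∨ v ∈ C

/-- A block of `G`: a maximal vertex set inducing a connected subgraph without cut vertices. -/
def IsBlock (G : SimpleGraph V) (B : Set V) : Prop :=
  B.Nonempty ∧ (G.induce B).Connected ∧ (∀ x, ¬ IsCutVertex (G.induce B) x) ∧
    ∀ B' : Set V, B ⊆ B' → (G.induce B').Connected →
      (∀ x, ¬ IsCutVertex (G.induce B') x) → B' = B

/-- 2-connected: connected, at least 3 vertices, no cut vertex. -/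
def TwoConnected (G : SimpleGraph V) [Fintype V] : Prop :=
  G.Connected ∧ 3 ≤ Fintype.card V ∧ ∀ v, ¬ IsCutVertex G v

/-- Colours 1, 0, 0̂. -/
inductive Col : Type
  | one | zero | zhat
deriving DecidableEq

/-- `S` is an `f`-respecting simultaneous dominating set of `G`. -/
def RespSDS (G : SimpleGraph V) (f : V → Col) (S : Set V) : Prop :=
  (∀ v, f v = Col.one → v ∈ S) ∧ ∀ v, f v = Col.zhat → SimDominated G S v

/-- A minimum `f`-respecting simultaneous dominating set. -/
def MinRespSDS (G : SimpleGraph V) (f : V → Col) (S : Set V) : Prop :=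
  RespSDS G f S ∧ ∀ S' : Set V, RespSDS G f S' → S.ncard ≤ S'.ncard

/-- connected-on-a-set predicate -/
def CSet (G : SimpleGraph V) (s : Set V) : Prop :=
  s.Nonempty ∧ ∀ a ∈ s, ∀ b ∈ s, ∃ p : G.Walk a b, ∀ x ∈ p.support, x ∈ s

lemma walk_of_induce {G : SimpleGraph V} {s : Set V} {a b : ↑s}
    (p : (G.induce s).Walk a b) : ∃ q : G.Walk a b, ∀ x ∈ q.support, x ∈ s := by
  induction p with
  | nil => exact ⟨Walk.nil, by rintro x hx; simp at hx; subst hx; exact Subtype.coe_prop _⟩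
  | @cons u v w h p ih =>
    obtain ⟨q, hq⟩ := ih
    refine ⟨Walk.cons (by exact h) q, ?_⟩
    intro x hx
    change x ∈ (u : V) :: q.support at hx
    rw [List.mem_cons] at hx
    rcases hx with rfl | hx
    · exact u.2
    · exact hq x hx

lemma induce_walk_of_walk {G : SimpleGraph V} {s : Set V} {a b : V}
    (q : G.Walk a b) (hq : ∀ x ∈ q.support, x ∈ s) (ha : a ∈ s) (hb : b ∈ s) :
    Nonempty ((G.induce s).Walk ⟨a, ha⟩ ⟨b, hb⟩) := by
  induction q with
  | nil => exact ⟨Walk.nil⟩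
  | @cons u c w h p ih =>
    have hc : c ∈ s := hq c (by simp)
    obtain ⟨q'⟩ := ih (fun x hx => hq x (by simp [hx])) hc hb
    exact ⟨Walk.cons (by simpa using h) q'⟩

lemma induce_connected_iff {G : SimpleGraph V} {s : Set V} :
    (G.induce s).Connected ↔ CSet G s := by
  constructor
  · intro h
    obtain ⟨⟨a, ha⟩⟩ := h.nonempty
    refine ⟨⟨a, ha⟩, fun x hx y hy => ?_⟩
    obtain ⟨p⟩ := h.preconnected ⟨x, hx⟩ ⟨y, hy⟩
    exact walk_of_induce p
  · rintro ⟨⟨a, ha⟩, h⟩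
    have : Nonempty ↑s := ⟨⟨a, ha⟩⟩
    refine Connected.mk ?_
    rintro ⟨x, hx⟩ ⟨y, hy⟩
    obtain ⟨q, hq⟩ := h x hx y hy
    obtain ⟨w⟩ := induce_walk_of_walk q hq hx hy
    exact ⟨w⟩

lemma numComponents_eq_one {W : Type*} [Finite W] {G : SimpleGraph W} (h : G.Connected) :
    numComponents G = 1 := by
  have : Nonempty G.ConnectedComponent := ⟨G.connectedComponentMk h.nonempty.some⟩
  have hs : Subsingleton G.ConnectedComponent := by
    constructor
    intro c d
    refine ConnectedComponent.ind₂ (fun a b => ?_) c d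
    exact ConnectedComponent.sound (h.preconnected a b)
  exact Nat.card_eq_one_iff_unique.mpr ⟨hs, this⟩

lemma connected_of_numComponents_le_one {W : Type*} [Finite W] [Nonempty W]
    {G : SimpleGraph W} (h : numComponents G ≤ 1) : G.Connected := by
  have hne : Nonempty G.ConnectedComponent := ⟨G.connectedComponentMk (Classical.arbitrary W)⟩
  have hpos : 0 < Nat.card G.ConnectedComponent := Nat.card_pos
  have h1 : Nat.card G.ConnectedComponent = 1 := le_antisymm h hpos
  obtain ⟨hs, _⟩ := Nat.card_eq_one_iff_unique.mp h1
  refine Connected.mk ?_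
  intro a b
  exact ConnectedComponent.exact (Subsingleton.elim _ _)

/-- iso between the double induce and the single induce on `s \ {x}` -/
def doubleInduceIso (G : SimpleGraph V) (s : Set V) (x : ↑s) :
    (G.induce s).induce {u | u ≠ x} ≃g G.induce (s \ {(x : V)}) where
  toFun := fun u => ⟨u.1.1, u.1.2, fun h => u.2 (Subtype.ext h)⟩
  invFun := fun w => ⟨⟨w.1, w.2.1⟩, fun h => w.2.2 (congrArg Subtype.val h)⟩
  left_inv := fun u => by ext; rfl
  right_inv := fun w => by ext; rfl
  map_rel_iff' := Iff.rfl

lemma numComponents_iso {W W' : Type*} {G : SimpleGraph W} {G' : SimpleGraph W'}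
    (e : G ≃g G') : numComponents G = numComponents G' :=
  Nat.card_congr e.connectedComponentEquiv

/-- `Good G s` : `s` induces a connected graph with no cut vertex. -/
def Good (G : SimpleGraph V) (s : Set V) : Prop :=
  CSet G s ∧ ∀ x ∈ s, s \ {x} = ∅ ∨ CSet G (s \ {x})

lemma good_iff [Finite V] {G : SimpleGraph V} {s : Set V} :
    ((G.induce s).Connected ∧ ∀ x, ¬ IsCutVertex (G.induce s) x) ↔ Good G s := by
  constructor
  · rintro ⟨hc, hnc⟩
    refine ⟨induce_connected_iff.mp hc, ?_⟩
    intro x hx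
    rcases eq_or_ne (s \ {x}) ∅ with he | he
    · exact Or.inl he
    · right
      have hne : (s \ {x}).Nonempty := Set.nonempty_iff_ne_empty.mpr he
      have h1 : numComponents (G.induce s) = 1 := numComponents_eq_one hc
      have h2 := hnc ⟨x, hx⟩
      unfold IsCutVertex at h2
      rw [h1] at h2
      push_neg at h2
      rw [numComponents_iso (doubleInduceIso G s ⟨x, hx⟩)] at h2
      have : Nonempty ↑(s \ {x}) := hne.to_subtype
      exact induce_connected_iff.mp (connected_of_numComponents_le_one h2)
  · rintro ⟨hcs, hrem⟩
    have hc : (G.induce s).Connected := induce_connected_iff.mpr hcs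
    refine ⟨hc, ?_⟩
    rintro ⟨x, hx⟩
    unfold IsCutVertex
    rw [numComponents_eq_one hc, numComponents_iso (doubleInduceIso G s ⟨x, hx⟩)]
    push_neg
    rcases hrem x hx with he | hcs'
    · have : IsEmpty ↑(s \ {x}) := by
        rw [he]; exact Set.isEmpty_coe_sort.mpr rfl
      have : IsEmpty (G.induce (s \ {x})).ConnectedComponent := by
        constructor; intro c; exact c.ind (fun a => (this.false a))
      simp [numComponents, Nat.card_of_isEmpty]
    · exact le_of_eq (numComponents_eq_one (induce_connected_iff.mpr hcs'))

/-- IsBlock in terms of Good -/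
lemma isBlock_iff' [Finite V] {G : SimpleGraph V} {B : Set V} :
    (B.Nonempty ∧ (G.induce B).Connected ∧ (∀ x, ¬ IsCutVertex (G.induce B) x) ∧
      ∀ B' : Set V, B ⊆ B' → (G.induce B').Connected →
        (∀ x, ¬ IsCutVertex (G.induce B') x) → B' = B) ↔
    (Good G B ∧ ∀ B' : Set V, B ⊆ B' → Good G B' → B' = B) := by
  constructor
  · rintro ⟨hne, hc, hnc, hmax⟩
    refine ⟨good_iff.mp ⟨hc, hnc⟩, fun B' hsub hg => ?_⟩
    obtain ⟨hc', hnc'⟩ := good_iff.mpr hg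
    exact hmax B' hsub hc' hnc'
  · rintro ⟨hg, hmax⟩
    obtain ⟨hc, hnc⟩ := good_iff.mpr hg
    exact ⟨hg.1.1, hc, hnc, fun B' hsub hc' hnc' => hmax B' hsub (good_iff.mp ⟨hc', hnc'⟩)⟩

lemma CSet_singleton {G : SimpleGraph V} (a : V) : CSet G {a} := by
  refine ⟨⟨a, rfl⟩, ?_⟩
  rintro x rfl y rfl
  exact ⟨Walk.nil, by simp⟩

lemma CSet_pair {G : SimpleGraph V} {a b : V} (h : G.Adj a b) : CSet G {a, b} := by
  refine ⟨⟨a, Or.inl rfl⟩, ?_⟩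
  have key : ∀ x ∈ ({a, b} : Set V), ∃ p : G.Walk x b, ∀ y ∈ p.support, y ∈ ({a, b} : Set V) := by
    rintro x (rfl | rfl)
    · exact ⟨Walk.cons h Walk.nil, by intro y hy; simpa using hy⟩
    · exact ⟨Walk.nil, by intro y hy; simp at hy; simp [hy]⟩
  rintro x hx y hy
  obtain ⟨p, hp⟩ := key x hx
  obtain ⟨q, hq⟩ := key y hy
  exact ⟨p.append q.reverse, by
    intro z hz
    rw [Walk.mem_support_append_iff] at hz
    rcases hz with hz | hz
    · exact hp z hz
    · exact hq z (by simpa using hz)⟩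

lemma good_pair {G : SimpleGraph V} {a b : V} (h : G.Adj a b) : Good G {a, b} := by
  refine ⟨CSet_pair h, ?_⟩
  intro x hx
  rcases hx with rfl | rfl
  · right
    have : ({x, b} : Set V) \ {x} = {b} := by
      ext y; simp only [Set.mem_diff, Set.mem_insert_iff, Set.mem_singleton_iff]
      constructor
      · rintro ⟨h1, hy⟩
        rcases h1 with rfl | rfl
        · exact absurd rfl hy
        · rfl
      · rintro rfl; exact ⟨Or.inr rfl, h.ne'⟩
    rw [this]; exact CSet_singleton b
  · right
    have : ({a, x} : Set V) \ {x} = {a} := by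
      ext y; simp only [Set.mem_diff, Set.mem_insert_iff, Set.mem_singleton_iff]
      constructor
      · rintro ⟨h1, hy⟩
        rcases h1 with rfl | rfl
        · rfl
        · exact absurd rfl hy
      · rintro rfl; exact ⟨Or.inl rfl, h.ne⟩
    rw [this]; exact CSet_singleton a

/-- every Good set extends to a maximal one -/
lemma exists_maximal_good [Finite V] {G : SimpleGraph V} {A : Set V} (hA : Good G A) :
    ∃ B : Set V, A ⊆ B ∧ Good G B ∧ ∀ B' : Set V, B ⊆ B' → Good G B' → B' = B := by
  classical
  have : Finite (Set V) := by infer_instance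
  set C : Set (Set V) := {D | A ⊆ D ∧ Good G D} with hC
  have hCfin : C.Finite := Set.toFinite C
  have hCne : C.Nonempty := ⟨A, subset_rfl, hA⟩
  obtain ⟨B, hBC, hBmax⟩ := Set.Finite.exists_maximalFor (fun D => D.ncard) C hCfin hCne
  refine ⟨B, hBC.1, hBC.2, ?_⟩
  intro B' hsub hg
  have hB'C : B' ∈ C := ⟨hBC.1.trans hsub, hg⟩
  have hle : B.ncard ≤ B'.ncard := Set.ncard_le_ncard hsub (Set.toFinite B')
  have := le_antisymm hle (hBmax hB'C hle)
  exact (Set.eq_of_subset_of_ncard_le hsub (le_of_eq this.symm)).symm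

lemma exists_block_of_adj [Finite V] {G : SimpleGraph V} {v w : V} (h : G.Adj v w) :
    ∃ B : Set V, (Good G B ∧ ∀ B' : Set V, B ⊆ B' → Good G B' → B' = B) ∧ v ∈ B ∧ w ∈ B := by
  obtain ⟨B, hsub, hg, hmax⟩ := exists_maximal_good (good_pair h)
  exact ⟨B, ⟨hg, hmax⟩, hsub (Or.inl rfl), hsub (Or.inr rfl)⟩

lemma reachable_of_G_reachable {G H : SimpleGraph V}
    (step : ∀ a b, G.Adj a b → H.Reachable a b) {a b : V} (p : G.Walk a b) :
    H.Reachable a b := by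
  induction p with
  | nil => exact Reachable.refl _
  | cons h p ih => exact (step _ _ h).trans ih

lemma connected_sdiff_of_not_bridge {G : SimpleGraph V} (hc : G.Connected) {v w : V}
    (ha : G.Adj v w) (hb : ¬ G.IsBridge s(v, w)) :
    (G \ fromEdgeSet {s(v, w)}).Connected := by
  set H := G \ fromEdgeSet {s(v, w)} with hH
  have hr : H.Reachable v w := by
    rw [isBridge_iff] at hb
    push_neg at hb
    exact hb
  have step : ∀ a b, G.Adj a b → H.Reachable a b := by
    intro a b hab
    by_cases he : s(a, b) = s(v, w)
    · rw [Sym2.eq_iff] at he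
      rcases he with ⟨rfl, rfl⟩ | ⟨rfl, rfl⟩
      · exact hr
      · exact hr.symm
    · refine Adj.reachable ?_
      rw [hH, sdiff_adj, fromEdgeSet_adj]
      exact ⟨hab, fun hh => he hh.1⟩
  have : Nonempty V := hc.nonempty
  refine Connected.mk ?_
  intro a b
  obtain ⟨p⟩ := hc.preconnected a b
  exact reachable_of_G_reachable step p

lemma exists_spanning_tree [Finite V] {G : SimpleGraph V} (hc : G.Connected) :
    ∃ T : SimpleGraph V, T ≤ G ∧ T.IsTree := by
  classical
  generalize hn : G.edgeSet.ncard = n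
  induction n using Nat.strong_induction_on generalizing G with
  | _ n ih =>
    by_cases hac : G.IsAcyclic
    · exact ⟨G, le_rfl, ⟨hc, hac⟩⟩
    · rw [isAcyclic_iff_forall_edge_isBridge] at hac
      push_neg at hac
      obtain ⟨e, he, hbr⟩ := hac
      revert he hbr
      induction e using Sym2.ind with
      | _ v w =>
        intro he hbr
        have ha : G.Adj v w := he
        have hHc := connected_sdiff_of_not_bridge hc ha hbr
        have hes : (G \ fromEdgeSet {s(v, w)}).edgeSet = G.edgeSet \ {s(v, w)} := by
          rw [edgeSet_sdiff, edgeSet_fromEdgeSet, edgeSet_sdiff_sdiff_isDiag]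
        have hlt : (G \ fromEdgeSet {s(v, w)}).edgeSet.ncard < n := by
          rw [hes, ← hn]
          exact Set.ncard_diff_singleton_lt_of_mem he (Set.toFinite _)
        obtain ⟨T, hT1, hT2⟩ := ih _ hlt hHc rfl
        exact ⟨T, hT1.trans sdiff_le, hT2⟩

lemma path_split_mem [DecidableEq V] {G : SimpleGraph V} {v z a : V} {q : G.Walk v z} (hq : q.IsPath)
    (ha : a ∈ q.support) {y : V} (hyd : y ∈ (q.dropUntil a ha).support)
    (hyt : y ∈ (q.takeUntil a ha).support) : y = a := by
  have hnd := hq.support_nodup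
  rw [← q.take_spec ha, Walk.support_append] at hnd
  have hcons : (q.dropUntil a ha).support = a :: (q.dropUntil a ha).support.tail :=
    Walk.support_eq_cons _
  rw [hcons, List.mem_cons] at hyd
  rcases hyd with rfl | hyd
  · rfl
  · exact absurd hyt (List.disjoint_of_nodup_append hnd hyt hyd |>.elim)

lemma reach_end_avoid [DecidableEq V] {G : SimpleGraph V} {v z e x : V} {q : G.Walk v z} (hq : q.IsPath)
    (he : e ∈ q.support) (hxe : x ≠ e) :
    ∃ (b : V) (wk : G.Walk e b), (b = v ∨ b = z) ∧ (∀ y ∈ wk.support, y ∈ q.support) ∧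
      x ∉ wk.support := by
  by_cases hxd : x ∈ (q.dropUntil e he).support
  · refine ⟨v, (q.takeUntil e he).reverse, Or.inl rfl, ?_, ?_⟩
    · intro y hy
      rw [Walk.support_reverse, List.mem_reverse] at hy
      exact q.support_takeUntil_subset he hy
    · rw [Walk.support_reverse, List.mem_reverse]
      intro hxt
      exact hxe (path_split_mem hq he hxd hxt)
  · exact ⟨z, q.dropUntil e he, Or.inr rfl, fun y hy => q.support_dropUntil_subset he hy, hxd⟩

lemma ear_lemma [Finite V] {G : SimpleGraph V} {B : Set V}
    (hgood : Good G B) (hmax : ∀ B' : Set V, B ⊆ B' → Good G B' → B' = B)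
    {v z : V} (hv : v ∈ B) (hz : z ∈ B) (q : G.Walk v z) (hq : q.IsPath)
    (hlen : 2 ≤ q.length) (hmid : ∀ x ∈ q.support, x ≠ v → x ≠ z → x ∉ B) : False := by
  classical
  have hvz : v ≠ z := by
    rintro rfl
    have := Walk.isPath_iff_eq_nil.mp hq
    rw [this] at hlen
    simp at hlen
  -- second vertex of q
  obtain ⟨c, hcsup, hcv, hcz⟩ : ∃ c, c ∈ q.support ∧ c ≠ v ∧ c ≠ z := by
    cases q with
    | nil => simp at hlen
    | @cons _ c _ h q₂ =>
      have hq₂ : q₂.IsPath ∧ v ∉ q₂.support := by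
        rw [Walk.cons_isPath_iff] at hq
        exact ⟨hq.1, hq.2⟩
      refine ⟨c, by simp, fun hcv => hq₂.2 (hcv ▸ q₂.start_mem_support), fun hcz => ?_⟩
      subst hcz
      have := Walk.isPath_iff_eq_nil.mp hq₂.1
      rw [this] at hlen
      simp at hlen
  set E : Set V := {x | x ∈ q.support ∧ x ≠ v ∧ x ≠ z} with hE
  have hcE : c ∈ E := ⟨hcsup, hcv, hcz⟩
  have hcB : c ∉ B := hmid c hcsup hcv hcz
  have hsupB : ∀ x ∈ q.support, x ∈ B ∪ E := by
    intro x hx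
    by_cases hxv : x = v
    · exact Or.inl (hxv ▸ hv)
    by_cases hxz : x = z
    · exact Or.inl (hxz ▸ hz)
    exact Or.inr ⟨hx, hxv, hxz⟩
  have hgood' : Good G (B ∪ E) := by
    constructor
    · -- CSet
      refine ⟨⟨v, Or.inl hv⟩, ?_⟩
      have sub : ∀ a ∈ B ∪ E, ∃ p : G.Walk a z, ∀ y ∈ p.support, y ∈ B ∪ E := by
        intro a ha
        rcases ha with haB | haE
        · obtain ⟨p, hp⟩ := hgood.1.2 a haB z hz
          exact ⟨p, fun y hy => Or.inl (hp y hy)⟩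
        · exact ⟨q.dropUntil a haE.1, fun y hy =>
            hsupB y (q.support_dropUntil_subset haE.1 hy)⟩
      intro a ha b hb
      obtain ⟨pa, hpa⟩ := sub a ha
      obtain ⟨pb, hpb⟩ := sub b hb
      refine ⟨pa.append pb.reverse, ?_⟩
      intro y hy
      rw [Walk.mem_support_append_iff] at hy
      rcases hy with hy | hy
      · exact hpa y hy
      · exact hpb y (by simpa using hy)
    · -- removal of a vertex
      intro x hx
      right
      obtain ⟨t0, ht0B, ht0x⟩ : ∃ t0, t0 ∈ B ∧ t0 ≠ x := by
        by_cases hxv : v = x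
        · exact ⟨z, hz, fun h => hvz (hxv.trans h.symm)⟩
        · exact ⟨v, hv, hxv⟩
      have hD : CSet G (B \ {x}) := by
        by_cases hxB : x ∈ B
        · rcases hgood.2 x hxB with he | h
          · exact absurd he (Set.nonempty_iff_ne_empty.mp ⟨t0, ht0B, ht0x⟩)
          · exact h
        · rw [Set.diff_singleton_eq_self hxB]
          exact hgood.1
      have hDsub : B \ {x} ⊆ (B ∪ E) \ {x} := fun y hy => ⟨Or.inl hy.1, hy.2⟩
      have claim : ∀ a ∈ (B ∪ E) \ {x}, ∃ (b : V) (p : G.Walk a b), b ∈ B \ {x} ∧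
          ∀ y ∈ p.support, y ∈ (B ∪ E) \ {x} := by
        rintro a ⟨haBE, hax⟩
        rcases haBE with haB | haE
        · exact ⟨a, Walk.nil, ⟨haB, hax⟩, by
            intro y hy
            simp only [Walk.support_nil, List.mem_singleton] at hy
            subst hy
            exact ⟨Or.inl haB, hax⟩⟩
        · have hxa : x ≠ a := fun h => hax (by simp [← h])
          obtain ⟨b, wk, hb, hsub, hxw⟩ := reach_end_avoid hq haE.1 hxa
          have hbB : b ∈ B := by rcases hb with rfl | rfl; exacts [hv, hz]
          have hbx : b ≠ x := fun h => hxw (h ▸ wk.end_mem_support)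
          refine ⟨b, wk, ⟨hbB, by simpa using hbx⟩, ?_⟩
          intro y hy
          refine ⟨hsupB y (hsub y hy), ?_⟩
          simp only [Set.mem_singleton_iff]
          intro hyx
          exact hxw (hyx ▸ hy)
      refine ⟨⟨t0, hDsub ⟨ht0B, by simpa using ht0x⟩⟩, ?_⟩
      intro a ha b hb
      obtain ⟨ba, pa, hbaD, hpa⟩ := claim a ha
      obtain ⟨bb, pb, hbbD, hpb⟩ := claim b hb
      obtain ⟨pm, hpm⟩ := hD.2 ba hbaD bb hbbD
      refine ⟨pa.append (pm.append pb.reverse), ?_⟩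
      intro y hy
      rw [Walk.mem_support_append_iff] at hy
      rcases hy with hy | hy
      · exact hpa y hy
      · rw [Walk.mem_support_append_iff] at hy
        rcases hy with hy | hy
        · exact hDsub (hpm y hy)
        · exact hpb y (by simpa using hy)
  have heq := hmax (B ∪ E) Set.subset_union_left hgood'
  have : c ∈ B := heq ▸ (Or.inr hcE : c ∈ B ∪ E)
  exact hcB this

lemma mapLe_support {G G' : SimpleGraph V} (h : G ≤ G') {a b : V} (p : G.Walk a b) :
    (p.mapLe h).support = p.support := by
  induction p with
  | nil => rfl
  | cons _ _ ih =>
    simp only [Walk.mapLe, Walk.map_cons, Walk.support_cons] at *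
    rw [ih]

lemma mapLe_length {G G' : SimpleGraph V} (h : G ≤ G') {a b : V} (p : G.Walk a b) :
    (p.mapLe h).length = p.length := Walk.length_map _ _

lemma mapLe_isPath {G G' : SimpleGraph V} (h : G ≤ G') {a b : V} {p : G.Walk a b}
    (hp : p.IsPath) : (p.mapLe h).IsPath := by
  rw [Walk.isPath_def, mapLe_support]
  exact hp.support_nodup

lemma trim [DecidableEq V] {T : SimpleGraph V} {B : Set V} {v : V} :
    ∀ (n : ℕ) (z : V) (p : T.Walk v z), p.length ≤ n → p.IsPath → z ∈ B → v ≠ z →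
    ∃ (z' : V) (p' : T.Walk v z'), p'.IsPath ∧ z' ∈ B ∧ v ≠ z' ∧
      (∀ x ∈ p'.support, x ≠ v → x ≠ z' → x ∉ B) := by
  intro n
  induction n with
  | zero =>
    intro z p hlen hp hz hvz
    exact absurd (Walk.eq_of_length_eq_zero (Nat.le_zero.mp hlen)) hvz
  | succ n ih =>
    intro z p hlen hp hz hvz
    by_cases hex : ∃ x ∈ p.support, x ≠ v ∧ x ≠ z ∧ x ∈ B
    · obtain ⟨x, hxs, hxv, hxz, hxB⟩ := hex
      have hdec : (p.takeUntil x hxs).length ≤ n := by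
        have hspec := congrArg Walk.length (p.take_spec hxs)
        rw [Walk.length_append] at hspec
        have hd1 : 1 ≤ (p.dropUntil x hxs).length := by
          by_contra hcon
          push_neg at hcon
          exact hxz (Walk.eq_of_length_eq_zero (Nat.lt_one_iff.mp hcon))
        omega
      exact ih x (p.takeUntil x hxs) hdec (hp.takeUntil hxs) hxB (Ne.symm hxv)
    · push_neg at hex
      exact ⟨z, p, hp, hz, hvz, hex⟩

/-- key lemma for the ⇐ direction: in any spanning tree, `v` has a `T`-neighbour in its block -/
lemma tree_adj_in_block [Finite V] {G T : SimpleGraph V} (hle : T ≤ G) (hT : T.IsTree)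
    {B : Set V} (hgood : Good G B) (hmax : ∀ B' : Set V, B ⊆ B' → Good G B' → B' = B)
    {v w : V} (hv : v ∈ B) (hw : w ∈ B) (hvw : v ≠ w) :
    ∃ u ∈ B, T.Adj v u := by
  classical
  obtain ⟨p0⟩ := hT.isConnected.preconnected v w
  obtain ⟨z', p', hp', hz', hvz', hmid⟩ :=
    trim p0.toPath.1.length w p0.toPath.1 le_rfl p0.toPath.2 hw hvw
  cases p' with
  | nil => exact absurd rfl hvz'
  | @cons _ c _ hadj p₂ =>
    by_cases hcB : c ∈ B
    · exact ⟨c, hcB, hadj⟩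
    · exfalso
      have hcz : c ≠ z' := by rintro rfl; exact hcB hz'
      have hlen2 : 2 ≤ (Walk.cons hadj p₂).length := by
        rw [Walk.length_cons]
        have : 1 ≤ p₂.length := by
          by_contra hcon
          push_neg at hcon
          exact hcz (Walk.eq_of_length_eq_zero (Nat.lt_one_iff.mp hcon))
        omega
      refine ear_lemma hgood hmax hv hz' ((Walk.cons hadj p₂).mapLe hle)
        (mapLe_isPath hle hp') (by rwa [mapLe_length]) ?_
      intro x hx
      rw [mapLe_support] at hx
      exact hmid x hx

lemma reachable_avoid {G H : SimpleGraph V} {v : V}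
    (step : ∀ a b, G.Adj a b → a ≠ v → b ≠ v → H.Adj a b) {a b : V} (p : G.Walk a b)
    (hp : ∀ x ∈ p.support, x ≠ v) : H.Reachable a b := by
  induction p with
  | nil => exact Reachable.refl _
  | @cons a c w h p ih =>
    have hac : H.Adj a c :=
      step a c h (hp a (by simp)) (hp c (by simp))
    exact hac.reachable.trans (ih (fun x hx => hp x (by simp [hx])))

lemma exists_ne_of_cut [Finite V] {G : SimpleGraph V} {v : V} (h : IsCutVertex G v) :
    ∃ u, u ≠ v := by
  by_contra hc
  push_neg at hc
  have he : IsEmpty ↑{u : V | u ≠ v} := ⟨fun u => u.2 (hc u.1)⟩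
  have he2 : IsEmpty (G.induce {u : V | u ≠ v}).ConnectedComponent :=
    ⟨fun c => c.ind (fun a => he.false a)⟩
  unfold IsCutVertex numComponents at h
  rw [Nat.card_of_isEmpty (α := (G.induce {u : V | u ≠ v}).ConnectedComponent)] at h
  exact Nat.not_lt_zero _ h

lemma exists_adj_of_ne {G : SimpleGraph V} (hG : G.Connected) {v u : V} (hne : u ≠ v) :
    ∃ w, G.Adj v w := by
  obtain ⟨p⟩ := hG.preconnected v u
  cases p with
  | nil => exact absurd rfl hne
  | cons h _ => exact ⟨_, h⟩

/-- For a cut vertex `v ∉ S` of connected `G`, `v` is simultaneously dominated by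
`S` iff some block `B` containing `v` has all of `v`'s neighbours in `B` belonging to `S`. -/

theorem stmt2 [Fintype V] (G : SimpleGraph V) (hG : G.Connected) (S : Set V) (v : V)
    (hv : IsCutVertex G v) (hvS : v ∉ S) :
    SimDominated G S v ↔
      ∃ B : Set V, IsBlock G B ∧ v ∈ B ∧ ∀ u ∈ B, G.Adj v u → u ∈ S := by
  classical
  constructor
  · -- forward direction
    intro hsim
    by_contra hno
    push_neg at hno
    set D : Set (Sym2 V) := {e | ∃ w ∈ S, e = s(v, w)} with hD
    set H := G.deleteEdges D with hH
    have hHadj_v : ∀ u, G.Adj v u → u ∉ S → H.Adj v u := by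
      intro u hu huS
      rw [hH, deleteEdges_adj]
      refine ⟨hu, ?_⟩
      rintro ⟨w, hwS, hew⟩
      rw [Sym2.eq_iff] at hew
      rcases hew with ⟨-, rfl⟩ | ⟨rfl, rfl⟩
      · exact huS hwS
      · exact hvS hwS
    have hHadj_nv : ∀ a b, G.Adj a b → a ≠ v → b ≠ v → H.Adj a b := by
      intro a b hab hav hbv
      rw [hH, deleteEdges_adj]
      refine ⟨hab, ?_⟩
      rintro ⟨w, hwS, hew⟩
      rw [Sym2.eq_iff] at hew
      rcases hew with ⟨rfl, rfl⟩ | ⟨rfl, rfl⟩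
      · exact hav rfl
      · exact hbv rfl
    have stepA : ∀ u, G.Adj v u → H.Reachable v u := by
      intro u hu
      by_cases huS : u ∈ S
      · obtain ⟨B, hBgm, hvB, huB⟩ := exists_block_of_adj hu
        have hBblock : IsBlock G B := isBlock_iff'.mpr hBgm
        obtain ⟨u', hu'B, hu'adj, hu'S⟩ := hno B hBblock hvB
        have hBv : CSet G (B \ {v}) := by
          rcases hBgm.1.2 v hvB with he | h
          · exact absurd he (Set.nonempty_iff_ne_empty.mp ⟨u, huB, by simpa using hu.ne'⟩)
          · exact h
        obtain ⟨p, hp⟩ := hBv.2 u ⟨huB, by simpa using hu.ne'⟩ u' ⟨hu'B, by simpa using hu'adj.ne'⟩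
        have hreach : H.Reachable u u' :=
          reachable_avoid hHadj_nv p (fun x hx => by simpa using (hp x hx).2)
        exact ((hHadj_v u' hu'adj hu'S).reachable.trans hreach.symm)
      · exact (hHadj_v u hu huS).reachable
    have stepAll : ∀ a b, G.Adj a b → H.Reachable a b := by
      intro a b hab
      by_cases hav : a = v
      · subst hav; exact stepA b hab
      by_cases hbv : b = v
      · subst hbv; exact (stepA a hab.symm).symm
      exact (hHadj_nv a b hab hav hbv).reachable
    have hne : Nonempty V := hG.nonempty
    have hHconn : H.Connected := by
      refine Connected.mk ?_
      intro a b
      obtain ⟨p⟩ := hG.preconnected a b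
      exact reachable_of_G_reachable stepAll p
    obtain ⟨T, hTle, hTtree⟩ := exists_spanning_tree hHconn
    have hdom := hsim T ⟨hTle.trans (deleteEdges_le D), hTtree⟩
    rcases hdom with hvmem | ⟨u, huS, hTadj⟩
    · exact hvS hvmem
    · have hHadj : H.Adj v u := hTle hTadj
      rw [hH, deleteEdges_adj] at hHadj
      exact hHadj.2 ⟨u, huS, rfl⟩
  · -- backward direction
    rintro ⟨B, hB, hvB, hall⟩ T ⟨hTle, hTtree⟩
    obtain ⟨hgood, hmax⟩ := isBlock_iff'.mp hB
    obtain ⟨u0, hu0⟩ := exists_ne_of_cut hv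
    obtain ⟨w0, hw0⟩ := exists_adj_of_ne hG hu0
    obtain ⟨w, hwB, hwv⟩ : ∃ w ∈ B, w ≠ v := by
      by_contra hcon
      push_neg at hcon
      have hBeq : B = {v} := Set.eq_singleton_iff_unique_mem.mpr ⟨hvB, hcon⟩
      have := hmax {v, w0} (by rw [hBeq]; exact Set.singleton_subset_iff.mpr (Or.inl rfl))
        (good_pair hw0)
      rw [hBeq] at this
      have : w0 ∈ ({v} : Set V) := this ▸ (Or.inr rfl : w0 ∈ ({v, w0} : Set V))
      exact hw0.ne' this
    obtain ⟨u, huB, hTadj⟩ := tree_adj_in_block hTle hTtree hgood hmax hvB hwB (Ne.symm hwv)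
    exact Or.inr ⟨u, hall u huB (hTle hTadj), hTadj⟩
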